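/- Suppose all vote shares p_d are distinct, and fix an allocation x ⊆ Fin N with |x| = Ŝ. Then x is Pareto efficient — meaning there is no allocation x' ⊆ Fin N with Dist(x') ≤ Dist(x) and Agg(x') ≤ Agg(x), at least one inequality strict — if and only if there exists a weight w > 0 such that Ŝ minimizes Φ_p(·; w) over {0,…,N} and x is a top-Ŝ allocation (that is, p_j < p_i for every i ∈ x and j ∉ x). -/

import Mathlib

open Finset

/-- Sum of the `S` largest entries of the vote-share profile `p`. -/
noncomputable def topSum {N : ℕ} (p : Fin N → ℝ) (S : ℕ) : ℝ :=
  ∑ i : Fin N, if (i : ℕ) < S then p (Tuple.sort p i.rev) else 0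

/-- `ordStat p i` is the `(i+1)`-th largest entry of `p` (so `ordStat p ⟨S-1,_⟩` is `p_(S)`). -/
noncomputable def ordStat {N : ℕ} (p : Fin N → ℝ) (i : Fin N) : ℝ :=
  p (Tuple.sort p i.rev)

/-- Total misrepresentation `Φ_p(S; w) = S + a − 2·Γ_p(S) + w·|a − S|` of a top-`S`
allocation at weight `w`, where `a = ∑ d, p d`. -/
noncomputable def PhiS {N : ℕ} (p : Fin N → ℝ) (S : ℕ) (w : ℝ) : ℝ :=
  (S : ℝ) + (∑ d, p d) - 2 * topSum p S + w * |(∑ d, p d) - (S : ℝ)|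
/-- District-level misrepresentation `Dist(x) = ∑_{d ∈ x} (1 − p_d) + ∑_{d ∉ x} p_d`. -/
noncomputable def distM {N : ℕ} (p : Fin N → ℝ) (x : Finset (Fin N)) : ℝ :=
  ∑ d ∈ x, (1 - p d) + ∑ d ∈ xᶜ, p d

/-- Statewide misrepresentation `Agg(x) = |a − |x||` where `a = ∑ d, p d`. -/
noncomputable def aggM {N : ℕ} (p : Fin N → ℝ) (x : Finset (Fin N)) : ℝ :=
  |(∑ d, p d) - (x.card : ℝ)|

/-- Total misrepresentation `Φ(x; w) = Dist(x) + w·Agg(x)` of allocation `x`. -/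
noncomputable def PhiA {N : ℕ} (p : Fin N → ℝ) (x : Finset (Fin N)) (w : ℝ) : ℝ :=
  distM p x + w * aggM p x


section Aux

open Finset

variable {N : ℕ}

noncomputable def topSet (p : Fin N → ℝ) (S : ℕ) : Finset (Fin N) :=
  (Finset.univ.filter (fun i : Fin N => (i : ℕ) < S)).image (fun i => Tuple.sort p i.rev)

lemma sortrev_inj (p : Fin N → ℝ) :
    Function.Injective (fun i : Fin N => Tuple.sort p i.rev) := by
  intro i j h
  simpa using Fin.rev_injective ((Tuple.sort p).injective h)

lemma card_filter_lt (N S : ℕ) (h : S ≤ N) :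
    ((Finset.univ : Finset (Fin N)).filter (fun i : Fin N => (i : ℕ) < S)).card = S := by
  rw [Finset.card_eq_of_bijective (f := fun k hk => (⟨k, lt_of_lt_of_le hk h⟩ : Fin N))]
  · intro a ha
    simp only [Finset.mem_filter, Finset.mem_univ, true_and] at ha
    exact ⟨a, ha, rfl⟩
  · intro i hi; simpa using hi
  · intro i j hi hj hij; simpa [Fin.ext_iff] using hij

lemma card_topSet (p : Fin N → ℝ) (S : ℕ) (h : S ≤ N) :
    (topSet p S).card = S := by
  rw [topSet, Finset.card_image_of_injective _ (sortrev_inj p), card_filter_lt N S h]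

lemma topSum_eq_filter (p : Fin N → ℝ) (S : ℕ) :
    topSum p S = ∑ i ∈ (Finset.univ.filter (fun i : Fin N => (i : ℕ) < S)),
      p (Tuple.sort p i.rev) := by
  rw [topSum, Finset.sum_filter]

lemma sum_topSet (p : Fin N → ℝ) (S : ℕ) :
    ∑ d ∈ topSet p S, p d = topSum p S := by
  rw [topSet, topSum_eq_filter, Finset.sum_image]
  intro a _ b _ h; exact sortrev_inj p h

lemma topSum_succ (p : Fin N → ℝ) (S : ℕ) (hS : S < N) :
    topSum p (S + 1) = topSum p S + ordStat p ⟨S, hS⟩ := by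
  rw [topSum_eq_filter, topSum_eq_filter]
  have hins : (Finset.univ.filter (fun i : Fin N => (i : ℕ) < S + 1))
      = insert (⟨S, hS⟩ : Fin N) (Finset.univ.filter (fun i : Fin N => (i : ℕ) < S)) := by
    ext i
    simp [Nat.lt_succ_iff_lt_or_eq, Fin.ext_iff]
    constructor <;> intro h <;> omega
  rw [hins, Finset.sum_insert (by simp), ordStat]
  ring

lemma ordStat_anti (p : Fin N → ℝ) : Antitone (ordStat p) := by
  intro i j hij
  exact Tuple.monotone_sort p (Fin.rev_le_rev.mpr hij)

lemma ordStat_strictAnti {p : Fin N → ℝ} (hinj : Function.Injective p) :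
    StrictAnti (ordStat p) := by
  intro i j hij
  refine lt_of_le_of_ne (ordStat_anti p hij.le) (fun h => ?_)
  have h2 : (Tuple.sort p) j.rev = (Tuple.sort p) i.rev := hinj h
  exact hij.ne (Fin.rev_injective ((Tuple.sort p).injective h2)).symm

lemma topSet_prop {p : Fin N → ℝ} (hinj : Function.Injective p) (S : ℕ) :
    ∀ i ∈ topSet p S, ∀ j ∉ topSet p S, p j < p i := by
  intro i hi j hj
  simp only [topSet, Finset.mem_image, Finset.mem_filter, Finset.mem_univ, true_and] at hi hj
  obtain ⟨a, ha, rfl⟩ := hi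
  have hb : j = Tuple.sort p ((Tuple.sort p).symm j |>.rev).rev := by simp
  set b := ((Tuple.sort p).symm j).rev with hbdef
  have hbS : ¬ (b : ℕ) < S := fun h => hj ⟨b, h, hb.symm⟩
  have hab : a < b := by
    have : S ≤ (b : ℕ) := not_lt.mp hbS
    exact Fin.lt_def.mpr (lt_of_lt_of_le ha this)
  have hle : p (Tuple.sort p b.rev) ≤ p (Tuple.sort p a.rev) :=
    ordStat_anti p hab.le
  rw [hb]
  refine lt_of_le_of_ne hle (fun h => ?_)
  have := Fin.rev_injective ((Tuple.sort p).injective (hinj h))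
  exact absurd this hab.ne'

lemma prop_unique {p : Fin N → ℝ} {x y : Finset (Fin N)}
    (hcard : x.card = y.card)
    (hx : ∀ i ∈ x, ∀ j ∉ x, p j < p i) (hy : ∀ i ∈ y, ∀ j ∉ y, p j < p i) :
    x = y := by
  by_contra hne
  have hxy : (x \ y).Nonempty := by
    rw [Finset.sdiff_nonempty]
    intro hsub
    exact hne (Finset.eq_of_subset_of_card_le hsub (le_of_eq hcard.symm))
  have hyx : (y \ x).Nonempty := by
    rw [Finset.sdiff_nonempty]
    intro hsub
    exact hne (Finset.eq_of_subset_of_card_le hsub (le_of_eq hcard)).symm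
  obtain ⟨i, hi⟩ := hxy
  obtain ⟨j, hj⟩ := hyx
  rw [Finset.mem_sdiff] at hi hj
  exact absurd (hx i hi.1 j hj.2) (not_lt.mpr (hy j hj.1 i hi.2).le)

lemma swap_lemma (p : Fin N → ℝ) (x : Finset (Fin N)) {i j : Fin N}
    (hi : i ∈ x) (hj : j ∉ x) :
    (insert j (x.erase i)).card = x.card ∧
    ∑ d ∈ insert j (x.erase i), p d = ∑ d ∈ x, p d - p i + p j := by
  have hj' : j ∉ x.erase i := fun h => hj (Finset.mem_of_mem_erase h)
  constructor
  · rw [Finset.card_insert_of_notMem hj', Finset.card_erase_of_mem hi]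
    have : 1 ≤ x.card := Finset.card_pos.mpr ⟨i, hi⟩
    omega
  · rw [Finset.sum_insert hj', Finset.sum_erase_eq_sub hi]
    ring

lemma prop_of_not_exists_better {p : Fin N → ℝ} (hinj : Function.Injective p)
    {x : Finset (Fin N)}
    (hmax : ∀ y : Finset (Fin N), y.card = x.card → ∑ d ∈ y, p d ≤ ∑ d ∈ x, p d) :
    ∀ i ∈ x, ∀ j ∉ x, p j < p i := by
  intro i hi j hj
  by_contra hlt
  have hne : p i ≠ p j := fun h => hj (hinj h ▸ hi)
  have hij : p i < p j := lt_of_le_of_ne (not_lt.mp hlt) hne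
  obtain ⟨hc, hs⟩ := swap_lemma p x hi hj
  have := hmax _ hc
  rw [hs] at this
  linarith

lemma sum_le_topSum {p : Fin N → ℝ} (hinj : Function.Injective p)
    (x : Finset (Fin N)) :
    ∑ d ∈ x, p d ≤ topSum p x.card := by
  classical
  set S := x.card with hS
  have hSN : S ≤ N := by
    rw [hS]
    simpa using Finset.card_le_univ x
  obtain ⟨y, hy, hymax⟩ := Finset.exists_max_image
    (Finset.univ.powersetCard S) (fun y => ∑ d ∈ y, p d)
    ⟨x, by simp [Finset.mem_powersetCard, hS]⟩
  simp only [Finset.mem_powersetCard] at hy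
  have hyprop : ∀ i ∈ y, ∀ j ∉ y, p j < p i := by
    apply prop_of_not_exists_better hinj
    intro z hz
    exact hymax z (by simp [Finset.mem_powersetCard, hz, hy.2])
  have hytop : y = topSet p S :=
    prop_unique (by rw [hy.2, card_topSet p S hSN]) hyprop (topSet_prop hinj S)
  have hxy := hymax x (by simp [Finset.mem_powersetCard, hS])
  calc ∑ d ∈ x, p d ≤ ∑ d ∈ y, p d := hxy
    _ = topSum p S := by rw [hytop, sum_topSet]

lemma distM_eq (p : Fin N → ℝ) (x : Finset (Fin N)) :
    distM p x = (x.card : ℝ) + (∑ d, p d) - 2 * ∑ d ∈ x, p d := by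
  rw [distM]
  have h1 : ∑ d ∈ x, (1 - p d) = (x.card : ℝ) - ∑ d ∈ x, p d := by
    rw [Finset.sum_sub_distrib, Finset.sum_const, nsmul_eq_mul, mul_one]
  have h2 : ∑ d ∈ x, p d + ∑ d ∈ xᶜ, p d = ∑ d, p d := Finset.sum_add_sum_compl x p
  linarith

lemma distM_topSet (p : Fin N → ℝ) {S : ℕ} (h : S ≤ N) :
    distM p (topSet p S) = PhiS p S 0 := by
  rw [distM_eq, card_topSet p S h, sum_topSet, PhiS]
  ring

lemma aggM_topSet (p : Fin N → ℝ) {S : ℕ} (h : S ≤ N) :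
    aggM p (topSet p S) = |(∑ d, p d) - (S : ℝ)| := by
  rw [aggM, card_topSet p S h]

lemma phiS_step (p : Fin N → ℝ) (w : ℝ) (k : ℕ) (hk : k < N) :
    PhiS p (k+1) w - PhiS p k w
      = (1 - 2 * ordStat p ⟨k, hk⟩)
        + w * (|(∑ d, p d) - ((k:ℝ)+1)| - |(∑ d, p d) - (k:ℝ)|) := by
  rw [PhiS, PhiS, topSum_succ p k hk]
  push_cast
  ring

lemma abs_step_mono (a : ℝ) : Monotone (fun k : ℕ => |a - ((k:ℝ)+1)| - |a - (k:ℝ)|) := by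
  apply monotone_nat_of_le_succ
  intro k
  have h := abs_add_le (a - (k:ℝ)) (a - ((k:ℝ)+1+1))
  have h2 : |2 * (a - ((k:ℝ)+1))| = 2 * |a - ((k:ℝ)+1)| := by
    rw [abs_mul]; norm_num
  have h3 : a - (k:ℝ) + (a - ((k:ℝ)+1+1)) = 2 * (a - ((k:ℝ)+1)) := by ring
  push_cast
  rw [h3] at h
  rw [h2] at h
  linarith

lemma phiS_step_mono (p : Fin N → ℝ) {w : ℝ} (hw : 0 ≤ w)
    {k m : ℕ} (hkm : k ≤ m) (hm : m < N) :
    PhiS p (k+1) w - PhiS p k w ≤ PhiS p (m+1) w - PhiS p m w := by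
  have hk : k < N := lt_of_le_of_lt hkm hm
  rw [phiS_step p w k hk, phiS_step p w m hm]
  have h1 : ordStat p ⟨m, hm⟩ ≤ ordStat p ⟨k, hk⟩ :=
    ordStat_anti p (by simpa [Fin.le_def] using hkm)
  have h2 := abs_step_mono (∑ d, p d) hkm
  simp only at h2
  have := mul_le_mul_of_nonneg_left h2 hw
  linarith

lemma phi_min (p : Fin N → ℝ) {w : ℝ} (hw : 0 ≤ w) {Shat : ℕ} (hS : Shat ≤ N)
    (hup : ∀ _ : Shat < N, PhiS p Shat w ≤ PhiS p (Shat+1) w)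
    (hdn : ∀ _ : 0 < Shat, PhiS p Shat w ≤ PhiS p (Shat-1) w) :
    ∀ S' ≤ N, PhiS p Shat w ≤ PhiS p S' w := by
  intro S' hS'
  rcases le_or_gt Shat S' with h | h
  · induction S' with
    | zero =>
      have h0 : Shat = 0 := by omega
      simp [h0]
    | succ n ih =>
      rcases Nat.lt_or_ge Shat (n+1) with h1 | h1
      · have hn : Shat ≤ n := by omega
        have hnN : n < N := by omega
        have step : 0 ≤ PhiS p (n+1) w - PhiS p n w := by
          rcases Nat.eq_or_lt_of_le hn with rfl | hlt
          · linarith [hup hnN]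
          · have := phiS_step_mono p hw (k := Shat) (m := n) hn hnN
            have hSn : Shat < N := by omega
            linarith [hup hSn]
        have := ih (by omega) hn
        linarith
      · have : Shat = n + 1 := by omega
        rw [this]
  · have key : ∀ j : ℕ, j ≤ Shat → PhiS p Shat w ≤ PhiS p (Shat - j) w := by
      intro j
      induction j with
      | zero => intro _; simp
      | succ n ih =>
        intro hj
        have h1 : Shat - (n+1) < N := by omega
        have h2 : Shat - (n+1) + 1 = Shat - n := by omega
        have h3 : Shat - (n+1) ≤ Shat - 1 := by omega
        have h4 : Shat - 1 < N := by omega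
        have h5 : Shat - 1 + 1 = Shat := by omega
        have step := phiS_step_mono p hw (k := Shat - (n+1)) (m := Shat - 1) h3 h4
        rw [h2, h5] at step
        have hd := hdn (by omega)
        have := ih (by omega)
        linarith
    have := key (Shat - S') (by omega)
    have hE : Shat - (Shat - S') = S' := by omega
    rwa [hE] at this

lemma lemW (d1 d2 g1 g2 : ℝ) (hd : d1 < d2) (hg : g1 ≤ g2)
    (h1 : ¬(0 ≤ d1 ∧ 0 ≤ g1 ∧ (0 < d1 ∨ 0 < g1)))
    (h2 : ¬(d2 ≤ 0 ∧ g2 ≤ 0 ∧ (d2 < 0 ∨ g2 < 0))) :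
    ∃ w : ℝ, 0 < w ∧ d1 + w * g1 ≤ 0 ∧ 0 ≤ d2 + w * g2 := by
  rcases lt_or_ge g2 0 with hg2 | hg2
  · have hd2 : 0 < d2 := by
      by_contra hle
      exact h2 ⟨le_of_not_gt hle, hg2.le, Or.inr hg2⟩
    have hwpos : 0 < d2 / (-g2) := div_pos hd2 (by linarith)
    have e : d2 / (-g2) * (-g2) = d2 := div_mul_cancel₀ d2 (by linarith)
    have hmono : d2 / (-g2) * g1 ≤ d2 / (-g2) * g2 :=
      mul_le_mul_of_nonneg_left hg hwpos.le
    exact ⟨d2 / (-g2), hwpos, by nlinarith, by nlinarith⟩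
  · rcases lt_or_ge 0 g1 with hg1 | hg1
    · have hd1 : d1 < 0 := by
        by_contra hle
        exact h1 ⟨le_of_not_gt hle, hg1.le, Or.inr hg1⟩
      have hwpos : 0 < (-d1) / g1 := div_pos (by linarith) hg1
      have e : (-d1) / g1 * g1 = -d1 := div_mul_cancel₀ (-d1) (ne_of_gt hg1)
      have hmono : (-d1) / g1 * g1 ≤ (-d1) / g1 * g2 :=
        mul_le_mul_of_nonneg_left hg hwpos.le
      exact ⟨(-d1) / g1, hwpos, by nlinarith, by nlinarith⟩
    · rcases lt_or_ge 0 d1 with hd1 | hd1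
      · have hg1' : g1 < 0 := by
          rcases lt_or_eq_of_le hg1 with h | h
          · exact h
          · exact absurd ⟨hd1.le, h.ge, Or.inl hd1⟩ h1
        have hwpos : 0 < d1 / (-g1) := div_pos hd1 (by linarith)
        have e : d1 / (-g1) * (-g1) = d1 := div_mul_cancel₀ d1 (by linarith)
        have h2' : 0 ≤ d1 / (-g1) * g2 := mul_nonneg hwpos.le hg2
        exact ⟨d1 / (-g1), hwpos, by nlinarith, by nlinarith⟩
      · rcases lt_or_ge d2 0 with hd2 | hd2
        · have hg2' : 0 < g2 := by
            rcases lt_or_eq_of_le hg2 with h | h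
            · exact h
            · exact absurd ⟨hd2.le, le_of_eq h.symm, Or.inl hd2⟩ h2
          have hwpos : 0 < (-d2) / g2 := div_pos (by linarith) hg2'
          have e : (-d2) / g2 * g2 = -d2 := div_mul_cancel₀ (-d2) (ne_of_gt hg2')
          have h1' : (-d2) / g2 * g1 ≤ 0 := mul_nonpos_of_nonneg_of_nonpos hwpos.le hg1
          exact ⟨(-d2) / g2, hwpos, by nlinarith, by nlinarith⟩
        · exact ⟨1, one_pos, by nlinarith, by nlinarith⟩

end Aux

/-- Proposition 1: Pareto frontier and scalarization.
Suppose all vote shares are distinct, and fix an allocation `x` with `|x| = Ŝ`. Then `x`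
is Pareto efficient — no allocation `x'` has `Dist(x') ≤ Dist(x)` and `Agg(x') ≤ Agg(x)`
with at least one inequality strict — if and only if there exists a weight `w > 0` such
that `Ŝ` minimizes `Φ_p(·; w)` over `{0,…,N}` and `x` is a top-`Ŝ` allocation. -/
theorem stmt10 (N : ℕ) (hN : 3 ≤ N) (p : Fin N → ℝ)
    (hp : ∀ d, 0 ≤ p d ∧ p d ≤ 1) (hinj : Function.Injective p)
    (x : Finset (Fin N)) (Shat : ℕ) (hx : x.card = Shat) :
    (¬ ∃ x' : Finset (Fin N), distM p x' ≤ distM p x ∧ aggM p x' ≤ aggM p x ∧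
        (distM p x' < distM p x ∨ aggM p x' < aggM p x)) ↔
      (∃ w : ℝ, 0 < w ∧ (∀ S' ≤ N, PhiS p Shat w ≤ PhiS p S' w) ∧
        ∀ i ∈ x, ∀ j ∉ x, p j < p i) := by
  classical
  have hSN : Shat ≤ N := by
    rw [← hx]
    simpa using Finset.card_le_univ x
  constructor
  · -- Pareto efficient → scalarization
    intro hP
    have hprop : ∀ i ∈ x, ∀ j ∉ x, p j < p i := by
      by_contra hc
      push_neg at hc
      obtain ⟨i, hi, j, hj, hle⟩ := hc
      have hne : p i ≠ p j := fun h => hj (hinj h ▸ hi)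
      have hij : p i < p j := lt_of_le_of_ne hle hne
      obtain ⟨hc', hs⟩ := swap_lemma p x hi hj
      apply hP
      refine ⟨insert j (x.erase i), ?_, ?_, Or.inl ?_⟩
      · rw [distM_eq, distM_eq, hc', hs]; linarith
      · rw [aggM, aggM, hc']
      · rw [distM_eq, distM_eq, hc', hs]; linarith
    have hxtop : x = topSet p Shat :=
      prop_unique (by rw [hx, card_topSet p Shat hSN]) hprop (topSet_prop hinj Shat)
    have hsum : ∑ d ∈ x, p d = topSum p Shat := by rw [hxtop, sum_topSet]
    have hdx : distM p x = PhiS p Shat 0 := by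
      rw [hxtop, distM_topSet p hSN]
    have hax : aggM p x = |(∑ d, p d) - (Shat : ℝ)| := by
      rw [aggM, hx]
    have hnd : ∀ S, S ≤ N →
        ¬(PhiS p S 0 ≤ PhiS p Shat 0 ∧
          |(∑ d, p d) - (S:ℝ)| ≤ |(∑ d, p d) - (Shat:ℝ)| ∧
          (PhiS p S 0 < PhiS p Shat 0 ∨
            |(∑ d, p d) - (S:ℝ)| < |(∑ d, p d) - (Shat:ℝ)|)) := by
      rintro S hS ⟨hA, hB, hC⟩
      apply hP
      refine ⟨topSet p S, ?_, ?_, ?_⟩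
      · rw [distM_topSet p hS, hdx]; exact hA
      · rw [aggM_topSet p hS, hax]; exact hB
      · rcases hC with h | h
        · exact Or.inl (by rw [distM_topSet p hS, hdx]; exact h)
        · exact Or.inr (by rw [aggM_topSet p hS, hax]; exact h)
    -- Obtain the weight by cases on boundary
    have hkey : ∃ w : ℝ, 0 < w ∧
        (∀ _ : 0 < Shat, PhiS p Shat w ≤ PhiS p (Shat-1) w) ∧
        (∀ _ : Shat < N, PhiS p Shat w ≤ PhiS p (Shat+1) w) := by
      by_cases h0 : 0 < Shat
      · have hS1 : Shat - 1 < N := by omega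
        have hc1 : ((Shat - 1 : ℕ) : ℝ) = (Shat : ℝ) - 1 := by
          rw [Nat.cast_sub h0]; norm_num
        have hc2 : (Shat:ℝ) - 1 + 1 = (Shat:ℝ) := by ring
        set d1 : ℝ := 1 - 2 * ordStat p ⟨Shat - 1, hS1⟩ with hd1def
        set g1 : ℝ := |(∑ d, p d) - (Shat:ℝ)| - |(∑ d, p d) - ((Shat:ℝ)-1)| with hg1def
        have hstep1 : ∀ w' : ℝ, PhiS p Shat w' - PhiS p (Shat - 1) w' = d1 + w' * g1 := by
          intro w'
          have hh := phiS_step p w' (Shat - 1) hS1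
          rw [show Shat - 1 + 1 = Shat from by omega] at hh
          rw [hc1, hc2] at hh
          rw [hd1def, hg1def]
          linarith [hh]
        have hN1 : ¬(0 ≤ d1 ∧ 0 ≤ g1 ∧ (0 < d1 ∨ 0 < g1)) := by
          rintro ⟨ha1, ha2, ha3⟩
          apply hnd (Shat - 1) (by omega)
          have hs0 := hstep1 0
          have hAg : |(∑ d, p d) - ((Shat-1:ℕ):ℝ)| = |(∑ d, p d) - ((Shat:ℝ)-1)| := by
            rw [hc1]
          refine ⟨by linarith, by rw [hAg]; linarith, ?_⟩
          rcases ha3 with h | h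
          · exact Or.inl (by linarith)
          · exact Or.inr (by rw [hAg]; linarith)
        by_cases hNlt : Shat < N
        · -- interior case
          set d2 : ℝ := 1 - 2 * ordStat p ⟨Shat, hNlt⟩ with hd2def
          set g2 : ℝ := |(∑ d, p d) - ((Shat:ℝ)+1)| - |(∑ d, p d) - (Shat:ℝ)| with hg2def
          have hstep2 : ∀ w' : ℝ, PhiS p (Shat+1) w' - PhiS p Shat w' = d2 + w' * g2 := by
            intro w'
            rw [phiS_step p w' Shat hNlt, hd2def, hg2def]
          have hN2 : ¬(d2 ≤ 0 ∧ g2 ≤ 0 ∧ (d2 < 0 ∨ g2 < 0)) := by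
            rintro ⟨ha1, ha2, ha3⟩
            apply hnd (Shat + 1) (by omega)
            have hs0 := hstep2 0
            have hAg : |(∑ d, p d) - ((Shat+1:ℕ):ℝ)| = |(∑ d, p d) - ((Shat:ℝ)+1)| := by
              push_cast; ring_nf
            refine ⟨by linarith, by rw [hAg]; linarith, ?_⟩
            rcases ha3 with h | h
            · exact Or.inl (by linarith)
            · exact Or.inr (by rw [hAg]; linarith)
          have hdlt : d1 < d2 := by
            have hlt : (⟨Shat - 1, hS1⟩ : Fin N) < ⟨Shat, hNlt⟩ := by
              rw [Fin.lt_def]; simp; omega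
            have := ordStat_strictAnti hinj hlt
            rw [hd1def, hd2def]; linarith
          have hglt : g1 ≤ g2 := by
            have hmono := abs_step_mono (∑ d, p d) (show Shat - 1 ≤ Shat by omega)
            simp only at hmono
            rw [hc1, hc2] at hmono
            rw [hg1def, hg2def]
            exact hmono
          obtain ⟨w, hwpos, hw1, hw2⟩ := lemW d1 d2 g1 g2 hdlt hglt hN1 hN2
          refine ⟨w, hwpos, fun _ => ?_, fun _ => ?_⟩
          · have := hstep1 w; linarith
          · have := hstep2 w; linarith
        · -- Shat = N
          have hg2fake : g1 ≤ 1 + |g1| := by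
            have := le_abs_self g1; linarith
          have hN2fake : ¬((d1+1) ≤ 0 ∧ (1 + |g1|) ≤ 0 ∧ ((d1+1) < 0 ∨ (1 + |g1|) < 0)) := by
            rintro ⟨_, hb, _⟩
            have := abs_nonneg g1
            linarith
          obtain ⟨w, hwpos, hw1, _⟩ :=
            lemW d1 (d1+1) g1 (1 + |g1|) (by linarith) hg2fake hN1 hN2fake
          refine ⟨w, hwpos, fun _ => ?_, fun hlt => absurd hlt hNlt⟩
          have := hstep1 w; linarith
      · -- Shat = 0
        have h0' : Shat = 0 := by omega
        have hNlt : Shat < N := by omega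
        set d2 : ℝ := 1 - 2 * ordStat p ⟨Shat, hNlt⟩ with hd2def
        set g2 : ℝ := |(∑ d, p d) - ((Shat:ℝ)+1)| - |(∑ d, p d) - (Shat:ℝ)| with hg2def
        have hstep2 : ∀ w' : ℝ, PhiS p (Shat+1) w' - PhiS p Shat w' = d2 + w' * g2 := by
          intro w'
          rw [phiS_step p w' Shat hNlt, hd2def, hg2def]
        have hN2 : ¬(d2 ≤ 0 ∧ g2 ≤ 0 ∧ (d2 < 0 ∨ g2 < 0)) := by
          rintro ⟨ha1, ha2, ha3⟩
          apply hnd (Shat + 1) (by omega)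
          have hs0 := hstep2 0
          have hAg : |(∑ d, p d) - ((Shat+1:ℕ):ℝ)| = |(∑ d, p d) - ((Shat:ℝ)+1)| := by
            push_cast; ring_nf
          refine ⟨by linarith, by rw [hAg]; linarith, ?_⟩
          rcases ha3 with h | h
          · exact Or.inl (by linarith)
          · exact Or.inr (by rw [hAg]; linarith)
        have hg1fake : -(1 + |g2|) ≤ g2 := by
          have := neg_abs_le g2; linarith
        have hN1fake : ¬(0 ≤ d2 - 1 ∧ 0 ≤ -(1 + |g2|) ∧ (0 < d2 - 1 ∨ 0 < -(1 + |g2|))) := by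
          rintro ⟨_, hb, _⟩
          have := abs_nonneg g2
          linarith
        obtain ⟨w, hwpos, _, hw2⟩ :=
          lemW (d2-1) d2 (-(1 + |g2|)) g2 (by linarith) hg1fake hN1fake hN2
        refine ⟨w, hwpos, fun hlt => absurd hlt (by omega), fun _ => ?_⟩
        have := hstep2 w; linarith
    obtain ⟨w, hwpos, hdn, hup⟩ := hkey
    exact ⟨w, hwpos, phi_min p hwpos.le hSN hup hdn, hprop⟩
  · -- scalarization → Pareto efficient
    rintro ⟨w, hwpos, hmin, hprop⟩ ⟨x', h1, h2, h3⟩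
    have hxtop : x = topSet p Shat :=
      prop_unique (by rw [hx, card_topSet p Shat hSN]) hprop (topSet_prop hinj Shat)
    have hkey1 : distM p x + w * aggM p x = PhiS p Shat w := by
      rw [hxtop, distM_topSet p hSN, aggM_topSet p hSN, PhiS, PhiS]
      ring
    have hc' : x'.card ≤ N := by simpa using Finset.card_le_univ x'
    have hkey2 : PhiS p x'.card w ≤ distM p x' + w * aggM p x' := by
      rw [distM_eq, aggM, PhiS]
      have hts := sum_le_topSum hinj x'
      nlinarith
    have hkey3 := hmin x'.card hc'
    have hstrict : distM p x' + w * aggM p x' < distM p x + w * aggM p x := by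
      rcases h3 with h | h
      · have := mul_le_mul_of_nonneg_left h2 hwpos.le
        linarith
      · have := mul_lt_mul_of_pos_left h hwpos
        linarith
    linarith
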